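/- Let G be a finite group of parabolic characteristic p, T a subgroup of order p generated by a non-p-central element, C = C_G(T), and O_C = O_p(C). Then O_C contains a p-central element of G if and only if C has characteristic p. -/

import Mathlib

set_option linter.unusedSectionVars false
set_option linter.unusedVariables false
set_option maxHeartbeats 2000000




/-- The largest normal `p`-subgroup `O_p(G)`: the join of all normal `p`-subgroups. -/
def pCore (p : ℕ) (G : Type*) [Group G] : Subgroup G :=
  ⨆ (N : Subgroup G) (_ : N.Normal) (_ : IsPGroup p N), N

/-- A group `G` has characteristic `p` if `C_G(O_p(G)) ≤ O_p(G)`. -/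
def HasCharP (p : ℕ) (G : Type*) [Group G] : Prop :=
  Subgroup.centralizer (pCore p G : Set G) ≤ pCore p G

/-- An element is `p`-central if it has order `p` and lies in the center of some
Sylow `p`-subgroup of `G`. -/
def IsPCentral (p : ℕ) {G : Type*} [Group G] (x : G) : Prop :=
  orderOf x = p ∧ ∃ S : Sylow p G,
    x ∈ (S : Subgroup G) ⊓ Subgroup.centralizer ((S : Subgroup G) : Set G)

/-- A `p`-subgroup `P` is `p`-centric if `Z(P) = P ⊓ C_G(P)` is a Sylow `p`-subgroup of
`C_G(P)`, expressed via maximality among `p`-subgroups of `C_G(P)`. -/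
def IsPCentric (p : ℕ) {G : Type*} [Group G] (P : Subgroup G) : Prop :=
  ∀ Q : Subgroup G, Q ≤ Subgroup.centralizer (P : Set G) → IsPGroup p Q →
    P ⊓ Subgroup.centralizer (P : Set G) ≤ Q →
    Q = P ⊓ Subgroup.centralizer (P : Set G)

/-- The step `P ↦ O_p(N_G(P))`, viewed as a subgroup of `G`. -/
def pRadicalStep (p : ℕ) {G : Type*} [Group G] (P : Subgroup G) : Subgroup G :=
  (pCore p ↥(Subgroup.normalizer (P : Set G))).map (Subgroup.normalizer (P : Set G)).subtype

/-- The chain `P₀ = Q`, `P_{i+1} = O_p(N_G(P_i))`. -/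
def radChain (p : ℕ) {G : Type*} [Group G] (Q : Subgroup G) : ℕ → Subgroup G
  | 0 => Q
  | n + 1 => pRadicalStep p (radChain p Q n)

/-- `G` has local characteristic `p`: every `p`-local subgroup has characteristic `p`. -/
def LocalCharP (p : ℕ) (G : Type*) [Group G] : Prop :=
  ∀ P : Subgroup G, P ≠ ⊥ → IsPGroup p P → HasCharP p ↥(Subgroup.normalizer (P : Set G))

/-- `G` has parabolic characteristic `p`: every `p`-local subgroup containing a Sylow
`p`-subgroup of `G` has characteristic `p`. -/
def ParabolicCharP (p : ℕ) (G : Type*) [Group G] : Prop :=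
  ∀ P : Subgroup G, P ≠ ⊥ → IsPGroup p P →
    (∃ S : Sylow p G, (S : Subgroup G) ≤ Subgroup.normalizer (P : Set G)) → HasCharP p ↥(Subgroup.normalizer (P : Set G))



section PCoreBasics

variable {p : ℕ} [Fact p.Prime] {G : Type*} [Group G]

theorem le_pCore {N : Subgroup G} (hN : N.Normal) (hNp : IsPGroup p N) :
    N ≤ pCore p G := by
  have h1 : N ≤ ⨆ (_ : N.Normal) (_ : IsPGroup p N), N := by
    rw [iSup_pos hN, iSup_pos hNp]
  exact h1.trans (le_iSup (fun K : Subgroup G => ⨆ (_ : K.Normal) (_ : IsPGroup p K), K) N)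

theorem pCore_eq_iSup_subtype :
    pCore p G = ⨆ N : {N : Subgroup G // N.Normal ∧ IsPGroup p N}, (N : Subgroup G) := by
  apply le_antisymm
  · refine iSup_le fun N => iSup_le fun hN => iSup_le fun hNp => ?_
    exact le_iSup (fun K : {N : Subgroup G // N.Normal ∧ IsPGroup p N} => (K : Subgroup G))
      ⟨N, hN, hNp⟩
  · exact iSup_le fun N => le_pCore N.2.1 N.2.2

theorem mem_pCore_iff [Finite G] {g : G} :
    g ∈ pCore p G ↔ ∃ N : Subgroup G, N.Normal ∧ IsPGroup p N ∧ g ∈ N := by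
  constructor
  · intro hg
    rw [pCore_eq_iSup_subtype] at hg
    have hdir : Directed (· ≤ ·)
        (fun N : {N : Subgroup G // N.Normal ∧ IsPGroup p N} => (N : Subgroup G)) := by
      rintro ⟨N₁, hN₁, hNp₁⟩ ⟨N₂, hN₂, hNp₂⟩
      have := hN₁; have := hN₂
      refine ⟨⟨N₁ ⊔ N₂, ?_, ?_⟩, le_sup_left, le_sup_right⟩
      · exact Subgroup.sup_normal N₁ N₂
      · exact IsPGroup.to_sup_of_normal_right hNp₁ hNp₂
    haveI : Nonempty {N : Subgroup G // N.Normal ∧ IsPGroup p N} :=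
      ⟨⟨⊥, inferInstance, IsPGroup.of_bot⟩⟩
    rcases (Subgroup.mem_iSup_of_directed hdir).mp hg with ⟨⟨N, hN, hNp⟩, hgN⟩
    exact ⟨N, hN, hNp, hgN⟩
  · rintro ⟨N, hN, hNp, hgN⟩
    exact le_pCore hN hNp hgN

theorem pCore_normal [Finite G] : (pCore p G).Normal := by
  constructor
  intro n hn g
  rcases mem_pCore_iff.mp hn with ⟨N, hN, hNp, hgN⟩
  exact le_pCore hN hNp (hN.conj_mem n hgN g)

theorem pCore_isPGroup [Finite G] : IsPGroup p (pCore p G) := by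
  intro ⟨g, hg⟩
  rcases mem_pCore_iff.mp hg with ⟨N, hN, hNp, hgN⟩
  rcases hNp ⟨g, hgN⟩ with ⟨k, hk⟩
  refine ⟨k, ?_⟩
  have : (g : G) ^ p ^ k = 1 := by
    have := congrArg (Subgroup.subtype N) hk
    simpa using this
  ext
  simpa using this

end PCoreBasics
section P2
variable {p : ℕ} [Fact p.Prime] {G : Type*} [Group G]

variable [Finite G] {K : Subgroup G}

/-- `O_p(K)` as a subgroup of the ambient group. -/
noncomputable abbrev OP (p : ℕ) (K : Subgroup G) : Subgroup G := (pCore p ↥K).map K.subtype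

theorem OP_le : OP p K ≤ K := Subgroup.map_subtype_le _

theorem OP_isPGroup : IsPGroup p (OP p K) := (pCore_isPGroup).map _

theorem OP_conj_mem {k u : G} (hk : k ∈ K) (hu : u ∈ OP p K) : k * u * k⁻¹ ∈ OP p K := by
  rcases Subgroup.mem_map.mp hu with ⟨v, hv, rfl⟩
  have := (pCore_normal (p := p) (G := ↥K)).conj_mem v hv ⟨k, hk⟩
  exact Subgroup.mem_map.mpr ⟨_, this, rfl⟩

theorem le_OP {X : Subgroup G} (hXK : X ≤ K) (hXp : IsPGroup p X)
    (hconj : ∀ k ∈ K, ∀ x ∈ X, k * x * k⁻¹ ∈ X) : X ≤ OP p K := by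
  intro x hx
  have hnormal : (X.subgroupOf K).Normal := by
    constructor
    rintro n hn g
    rw [Subgroup.mem_subgroupOf] at hn ⊢
    exact hconj g g.2 n hn
  have hpg : IsPGroup p (X.subgroupOf K) :=
    hXp.comap_of_injective K.subtype Subtype.coe_injective
  have := le_pCore hnormal hpg
    (Subgroup.mem_subgroupOf.mpr (show ((⟨x, hXK hx⟩ : ↥K) : G) ∈ X by simpa using hx))
  exact Subgroup.mem_map.mpr ⟨⟨x, hXK hx⟩, this, rfl⟩

theorem OP_mem_of_charP (hK : HasCharP p ↥K) {g : G} (hg : g ∈ K)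
    (hcomm : ∀ u ∈ OP p K, u * g = g * u) : g ∈ OP p K := by
  have : (⟨g, hg⟩ : ↥K) ∈ Subgroup.centralizer ((pCore p ↥K : Subgroup ↥K) : Set ↥K) := by
    rw [Subgroup.mem_centralizer_iff]
    intro h hh
    ext
    exact hcomm (h : G) (Subgroup.mem_map.mpr ⟨h, hh, rfl⟩)
  exact Subgroup.mem_map.mpr ⟨_, hK this, rfl⟩

theorem OP_conj_inv {c : G} (hcK : ∀ g ∈ K, c * g * c⁻¹ ∈ K) (hcK' : ∀ g ∈ K, c⁻¹ * g * c ∈ K)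
    {u : G} (hu : u ∈ OP p K) : c * u * c⁻¹ ∈ OP p K := by
  have hX : ((OP p K).map (MulAut.conj c).toMonoidHom : Subgroup G) ≤ OP p K := by
    apply le_OP
    · rintro x hx
      rcases Subgroup.mem_map.mp hx with ⟨v, hv, rfl⟩
      exact hcK v (OP_le hv)
    · exact OP_isPGroup.map _
    · rintro k hk x hx
      rcases Subgroup.mem_map.mp hx with ⟨v, hv, rfl⟩
      have h1 : c⁻¹ * k * c ∈ K := by simpa [mul_assoc] using hcK' k hk
      have h2 : (c⁻¹ * k * c) * v * (c⁻¹ * k * c)⁻¹ ∈ OP p K := OP_conj_mem h1 hv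
      refine Subgroup.mem_map.mpr ⟨_, h2, ?_⟩
      simp only [MulEquiv.coe_toMonoidHom, MulAut.conj_apply]
      group
  apply hX
  exact Subgroup.mem_map.mpr ⟨u, hu, by simp⟩
end P2
section P3
variable {G : Type*} [Group G] [Finite G]

theorem mem_normalizer_of_conj_mem {E : Subgroup G} {a : G}
    (h : ∀ g ∈ E, a * g * a⁻¹ ∈ E) : a ∈ Subgroup.normalizer (E : Set G) := by
  rw [Subgroup.mem_normalizer_iff]
  intro g
  constructor
  · exact fun hg => h g hg
  · intro hg
    have hsurj : Function.Surjective (fun x : ↥E => (⟨a * x * a⁻¹, h x x.2⟩ : ↥E)) := by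
      apply Finite.surjective_of_injective
      intro x y hxy
      ext
      have : a * (x:G) * a⁻¹ = a * (y:G) * a⁻¹ := congrArg Subtype.val hxy
      exact mul_left_cancel (mul_right_cancel this)
    rcases hsurj ⟨a * g * a⁻¹, hg⟩ with ⟨x, hx⟩
    have : a * (x:G) * a⁻¹ = a * g * a⁻¹ := congrArg Subtype.val hx
    have : (x : G) = g := mul_left_cancel (mul_right_cancel this)
    exact this ▸ x.2

theorem conj_mem_of_mem_normalizer {E : Subgroup G} {u g : G} (hu : u ∈ Subgroup.normalizer (E : Set G))
    (hg : g ∈ E) : u * g * u⁻¹ ∈ E := (Subgroup.mem_normalizer_iff.mp hu g).mp hg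

/-- Every element of `zpowers y` is a natural power of `y` (in a finite group). -/
theorem exists_nat_pow_of_mem_zpowers {y u : G} (hu : u ∈ Subgroup.zpowers y) :
    ∃ k : ℕ, u = y ^ k := by
  rw [← mem_powers_iff_mem_zpowers] at hu
  rcases hu with ⟨k, hk⟩
  exact ⟨k, hk.symm⟩

/-- Coset-counting: if `y` of prime order `q ≠ p` normalizes the `p`-group `F` and
the coset `e * F` is `y`-conjugation-invariant, then it contains a `y`-fixed element. -/
theorem exists_fixed_mul_coset {p q : ℕ} [Fact p.Prime] (hq : q.Prime) (hqp : q ≠ p)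
    {y e : G} (hy : orderOf y = q) {F : Subgroup G} (hF : IsPGroup p F)
    (hyF : ∀ g ∈ F, y * g * y⁻¹ ∈ F) (he : e⁻¹ * (y * e * y⁻¹) ∈ F) :
    ∃ f ∈ F, y * (e * f) * y⁻¹ = e * f := by
  have hynorm : y ∈ Subgroup.normalizer (F : Set G) := mem_normalizer_of_conj_mem hyF
  -- commutator powers stay in F
  have hpow : ∀ k : ℕ, e⁻¹ * (y ^ k * e * y⁻¹ ^ k) ∈ F := by
    intro k
    induction k with
    | zero => simpa using F.one_mem
    | succ n ih =>
      have h1 : (y ^ n) * (e⁻¹ * (y * e * y⁻¹)) * (y ^ n)⁻¹ ∈ F :=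
        conj_mem_of_mem_normalizer (Subgroup.zpowers_le.mpr hynorm (Subgroup.pow_mem _ (Subgroup.mem_zpowers y) n)) he
      have key : e⁻¹ * (y ^ (n+1) * e * y⁻¹ ^ (n+1)) =
          (e⁻¹ * (y ^ n * e * y⁻¹ ^ n)) * ((y ^ n) * (e⁻¹ * (y * e * y⁻¹)) * (y ^ n)⁻¹) := by
        simp [pow_succ, inv_pow]
        group
      rw [key]
      exact F.mul_mem ih h1
  -- closure of the coset under conjugation by zpowers y
  have hclos : ∀ u ∈ Subgroup.zpowers y, ∀ g : G, e⁻¹ * g ∈ F → e⁻¹ * (u * g * u⁻¹) ∈ F := by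
    intro u hu g hg
    rcases exists_nat_pow_of_mem_zpowers hu with ⟨k, rfl⟩
    have h1 : e⁻¹ * (y ^ k * e * y⁻¹ ^ k) ∈ F := hpow k
    have h2 : (y ^ k) * (e⁻¹ * g) * (y ^ k)⁻¹ ∈ F :=
      conj_mem_of_mem_normalizer (Subgroup.zpowers_le.mpr hynorm (Subgroup.pow_mem _ (Subgroup.mem_zpowers y) k)) hg
    have key : e⁻¹ * (y ^ k * g * (y ^ k)⁻¹) =
        (e⁻¹ * (y ^ k * e * y⁻¹ ^ k)) * ((y ^ k) * (e⁻¹ * g) * (y ^ k)⁻¹) := by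
      simp [inv_pow]
      group
    rw [key]
    exact F.mul_mem h1 h2
  -- the coset as a type with an action of zpowers y
  let α := {g : G // e⁻¹ * g ∈ F}
  haveI : Finite α := by
    have : Function.Injective (fun a : α => (⟨e⁻¹ * a.1, a.2⟩ : ↥F)) := by
      intro a b hab
      have : e⁻¹ * (a:G) = e⁻¹ * (b:G) := congrArg Subtype.val hab
      exact Subtype.ext (mul_left_cancel this)
    exact Finite.of_injective _ this
  letI sInst : SMul ↥(Subgroup.zpowers y) α :=
    ⟨fun u a => ⟨(u : G) * a * (u : G)⁻¹, hclos u u.2 a a.2⟩⟩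
  have smul_def : ∀ (u : ↥(Subgroup.zpowers y)) (a : α), ((u • a : α) : G) = u * a * (u:G)⁻¹ :=
    fun _ _ => rfl
  letI : MulAction ↥(Subgroup.zpowers y) α :=
    { smul := sInst.smul
      one_smul := fun a => by
        ext
        rw [smul_def]
        simp
      mul_smul := fun u v a => by
        ext
        rw [smul_def, smul_def, smul_def]
        push_cast
        group }
  have hcard : ¬ q ∣ Nat.card α := by
    have hbij : Nat.card α = Nat.card ↥F := by
      apply Nat.card_congr
      exact ⟨fun a => (⟨e⁻¹ * a.1, a.2⟩ : ↥F), fun f => ⟨e * f, by simpa using f.2⟩,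
        fun a => by ext; simp, fun f => by ext; simp⟩
    rcases IsPGroup.iff_card.mp hF with ⟨n, hn⟩
    rw [hbij, hn]
    exact (Nat.Prime.coprime_iff_not_dvd hq).mp
      (((Nat.coprime_primes hq (Fact.out : p.Prime)).mpr hqp).pow_right n)
  have hpgr : IsPGroup q ↥(Subgroup.zpowers y) := by
    apply IsPGroup.of_card
    rw [Nat.card_zpowers, hy, pow_one]
  haveI : Fact q.Prime := ⟨hq⟩
  rcases hpgr.nonempty_fixed_point_of_prime_not_dvd_card α hcard with ⟨a, ha⟩
  have hfix : (⟨y, Subgroup.mem_zpowers y⟩ : ↥(Subgroup.zpowers y)) • a = a := ha _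
  have : y * (a : G) * y⁻¹ = a := congrArg Subtype.val hfix
  exact ⟨e⁻¹ * a, a.2, by
    have he' : e * (e⁻¹ * (a:G)) = a := by group
    rw [he']
    exact this⟩
end P3
section P3b
variable {G : Type*} [Group G] [Finite G]

/-- Quotient-counting: if `t` of order `p` normalizes `p`-groups `D < E` with `D ⊴ E`,
then some element of `E` outside `D` is fixed mod `D` by conjugation by `t`. -/
theorem exists_conj_coset_fixed {p : ℕ} [Fact p.Prime] {t : G} (ht : orderOf t = p)
    {E D : Subgroup G} (hE : IsPGroup p E) (hlt : D < E)
    (htE : t ∈ Subgroup.normalizer (E : Set G)) (htD : t ∈ Subgroup.normalizer (D : Set G)) (hDnorm : E ≤ Subgroup.normalizer (D : Set G)) :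
    ∃ g ∈ E, g ∉ D ∧ t * g * t⁻¹ * g⁻¹ ∈ D := by
  have hDE : D ≤ E := hlt.le
  haveI hD0 : (D.subgroupOf E).Normal := by
    constructor
    rintro n hn g
    rw [Subgroup.mem_subgroupOf] at hn ⊢
    exact conj_mem_of_mem_normalizer (hDnorm g.2) hn
  let Qb := ↥E ⧸ D.subgroupOf E
  -- conjugation action of zpowers t on Qb
  have hconjE : ∀ u ∈ Subgroup.zpowers t, ∀ g ∈ E, u * g * u⁻¹ ∈ E :=
    fun u hu g hg => conj_mem_of_mem_normalizer (Subgroup.zpowers_le.mpr htE hu) hg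
  have hconjD : ∀ u ∈ Subgroup.zpowers t, ∀ g ∈ D, u * g * u⁻¹ ∈ D :=
    fun u hu g hg => conj_mem_of_mem_normalizer (Subgroup.zpowers_le.mpr htD hu) hg
  letI sInst : SMul ↥(Subgroup.zpowers t) Qb :=
    ⟨fun u => Quotient.map' (fun g : ↥E => (⟨u * g * u⁻¹, hconjE u u.2 g g.2⟩ : ↥E))
      (by
        intro a b hab
        rw [QuotientGroup.leftRel_apply, Subgroup.mem_subgroupOf] at hab ⊢
        push_cast at hab ⊢
        have h2 : ((u:G) * ((a:G)⁻¹ * (b:G)) * (u:G)⁻¹) ∈ D := hconjD u u.2 _ hab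
        have key : ((u:G) * (a:G) * (u:G)⁻¹)⁻¹ * ((u:G) * (b:G) * (u:G)⁻¹) =
            (u:G) * ((a:G)⁻¹ * (b:G)) * (u:G)⁻¹ := by group
        rw [key]
        exact h2)⟩
  have smul_mk : ∀ (u : ↥(Subgroup.zpowers t)) (g : ↥E),
      (u • (QuotientGroup.mk g : Qb)) = QuotientGroup.mk (⟨u * g * u⁻¹, hconjE u u.2 g g.2⟩ : ↥E) :=
    fun u g => rfl
  letI : MulAction ↥(Subgroup.zpowers t) Qb :=
    { smul := sInst.smul
      one_smul := fun a => by
        induction a using Quotient.inductionOn' with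
        | h g =>
          show (1 : ↥(Subgroup.zpowers t)) • (QuotientGroup.mk g : Qb) = _
          rw [smul_mk]
          congr 1
          ext
          simp
      mul_smul := fun u v a => by
        induction a using Quotient.inductionOn' with
        | h g =>
          show (u * v) • (QuotientGroup.mk g : Qb) = u • (v • (QuotientGroup.mk g : Qb))
          rw [smul_mk, smul_mk, smul_mk]
          congr 1
          ext
          push_cast
          group }
  -- p divides card Qb
  have hcardE := Subgroup.card_eq_card_quotient_mul_card_subgroup (D.subgroupOf E)
  rcases IsPGroup.iff_card.mp hE with ⟨n, hn⟩
  have hdvd : Nat.card Qb ∣ p ^ n := hn ▸ Dvd.intro _ hcardE.symm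
  rcases (Nat.dvd_prime_pow (Fact.out : p.Prime)).mp hdvd with ⟨m, _, hm⟩
  have hm0 : m ≠ 0 := by
    intro h0
    rw [h0, pow_zero] at hm
    have : Subsingleton Qb := Nat.card_eq_one_iff_unique.mp hm |>.1
    apply hlt.ne
    apply le_antisymm hDE
    intro g hg
    have : (QuotientGroup.mk (⟨g, hg⟩ : ↥E) : Qb) = QuotientGroup.mk 1 := Subsingleton.elim _ _
    have := QuotientGroup.leftRel_apply.mp (Quotient.exact' this)
    rw [Subgroup.mem_subgroupOf] at this
    simpa using this
  have hpQ : p ∣ Nat.card Qb := hm ▸ dvd_pow_self p hm0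
  -- the trivial coset is fixed
  have h1fix : (QuotientGroup.mk (1 : ↥E) : Qb) ∈ MulAction.fixedPoints ↥(Subgroup.zpowers t) Qb := by
    intro u
    rw [smul_mk]
    congr 1
    ext
    simp
  have hpgr : IsPGroup p ↥(Subgroup.zpowers t) := by
    apply IsPGroup.of_card
    rw [Nat.card_zpowers, ht, pow_one]
  rcases hpgr.exists_fixed_point_of_prime_dvd_card_of_fixed_point Qb hpQ h1fix with ⟨b, hbfix, hbne⟩
  induction b using Quotient.inductionOn' with
  | h g =>
    refine ⟨(g : G)⁻¹, E.inv_mem g.2, ?_, ?_⟩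
    · intro hgD
      apply hbne
      show (QuotientGroup.mk (1:↥E) : Qb) = QuotientGroup.mk g
      apply Quotient.sound'
      rw [QuotientGroup.leftRel_apply, Subgroup.mem_subgroupOf]
      simpa using D.inv_mem hgD
    · have := hbfix ⟨t, Subgroup.mem_zpowers t⟩
      rw [show (Quotient.mk'' g : Qb) = QuotientGroup.mk g from rfl, smul_mk] at this
      have h2 := QuotientGroup.leftRel_apply.mp (Quotient.exact' this.symm)
      rw [Subgroup.mem_subgroupOf] at h2
      have h3 : ((g:G))⁻¹ * (t * g * t⁻¹) ∈ D := by simpa [mul_assoc] using h2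
      have key : t * (g:G)⁻¹ * t⁻¹ * ((g:G)⁻¹)⁻¹ = ((g:G)⁻¹ * (t * (g:G) * t⁻¹))⁻¹ := by
        group
      rw [key]
      exact D.inv_mem h3
end P3b
section P4
variable {G : Type*} [Group G] [Finite G]
open scoped commutatorElement

theorem map_conj_eq_of_mem_normalizer {E : Subgroup G} {a : G} (ha : a ∈ Subgroup.normalizer (E : Set G)) :
    Subgroup.map (MulAut.conj a).toMonoidHom E = E := by
  ext g
  simp only [Subgroup.mem_map, MulEquiv.coe_toMonoidHom, MulAut.conj_apply]
  constructor
  · rintro ⟨h, hh, rfl⟩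
    exact (Subgroup.mem_normalizer_iff.mp ha h).mp hh
  · intro hg
    refine ⟨a⁻¹ * g * a, ?_, by group⟩
    have h2 := (Subgroup.mem_normalizer_iff.mp ((Subgroup.normalizer (E : Set G)).inv_mem ha) g).mp hg
    simpa using h2

theorem card_lt_of_lt {E F : Subgroup G} (h : F < E) : Nat.card F < Nat.card E :=
  lt_of_le_of_ne (Subgroup.card_le_of_le h.le)
    (fun he => h.ne (Subgroup.eq_of_le_of_card_ge h.le he.ge))

/-- Thompson's `P × Q`-lemma, special case: `t` of order `p` and `y` of prime order `q ≠ p`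
commute and act by conjugation on the finite `p`-group `E`; if every `t`-fixed point of `E`
is `y`-fixed, then `y` centralizes `E`. -/
theorem pq_aux {p q : ℕ} [Fact p.Prime] (hq : q.Prime) (hqp : q ≠ p)
    {t y : G} (ht : orderOf t = p) (hy : orderOf y = q) (hty : t * y = y * t)
    (n : ℕ) :
    ∀ E : Subgroup G, Nat.card E ≤ n → IsPGroup p E →
      t ∈ Subgroup.normalizer (E : Set G) → y ∈ Subgroup.normalizer (E : Set G) →
      (∀ g ∈ E, t * g = g * t → y * g = g * y) →
      ∀ g ∈ E, y * g = g * y := by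
  induction n with
  | zero =>
    intro E hcard _ _ _ _
    have := Nat.card_pos (α := ↥E)
    omega
  | succ n IH =>
    intro E hcard hE htE hyE hcent
    set Y := Subgroup.zpowers y with hYdef
    set T := Subgroup.zpowers t with hTdef
    have hcty : Commute t y := hty
    -- commuting with y extends to Y
    have hcommY : ∀ {g : G}, y * g = g * y → ∀ u ∈ Y, u * g = g * u := by
      intro g hg u hu
      rcases Subgroup.mem_zpowers_iff.mp hu with ⟨k, rfl⟩
      exact ((Commute.zpow_left (show Commute y g from hg) k)).eq
    -- F = [E, Y]
    set F := ⁅E, Y⁆ with hFdef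
    have hFE : F ≤ E := by
      rw [hFdef, Subgroup.commutator_le]
      intro g₁ hg₁ g₂ hg₂
      have h2 : g₂ * g₁⁻¹ * g₂⁻¹ ∈ E :=
        conj_mem_of_mem_normalizer (Subgroup.zpowers_le.mpr hyE hg₂) (E.inv_mem hg₁)
      have : ⁅g₁, g₂⁆ = g₁ * (g₂ * g₁⁻¹ * g₂⁻¹) := by
        rw [commutatorElement_def]; group
      rw [this]
      exact E.mul_mem hg₁ h2
    -- conjugation invariance of F
    have hmapF : ∀ a : G, a ∈ Subgroup.normalizer (E : Set G) → a * y = y * a →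
        ∀ g ∈ F, a * g * a⁻¹ ∈ F := by
      intro a haE hay g hg
      have hmap : Subgroup.map (MulAut.conj a).toMonoidHom F = F := by
        rw [hFdef, Subgroup.map_commutator, map_conj_eq_of_mem_normalizer haE]
        congr 1
        rw [hYdef, MonoidHom.map_zpowers]
        simp only [MulEquiv.coe_toMonoidHom, MulAut.conj_apply]
        rw [show a * y * a⁻¹ = y by rw [hay]; group]
      rw [← hmap]
      exact Subgroup.mem_map.mpr ⟨g, hg, rfl⟩
    have htF : ∀ g ∈ F, t * g * t⁻¹ ∈ F := hmapF t htE hty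
    have hyF : ∀ g ∈ F, y * g * y⁻¹ ∈ F := hmapF y hyE rfl
    -- key: if y centralizes F then done
    have key : (∀ g ∈ F, y * g = g * y) → ∀ g ∈ E, y * g = g * y := by
      intro hFy g hg
      have hcomm : g⁻¹ * (y * g * y⁻¹) ∈ F := by
        have : g⁻¹ * (y * g * y⁻¹) = ⁅g⁻¹, y⁆ := by rw [commutatorElement_def]; group
        rw [this]
        exact Subgroup.commutator_mem_commutator (E.inv_mem hg) (Subgroup.mem_zpowers y)
      rcases exists_fixed_mul_coset hq hqp hy (hE.to_le hFE) hyF hcomm with ⟨f, hf, hfix⟩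
      have hyf : y * f⁻¹ * y⁻¹ = f⁻¹ := by
        rw [show y * f⁻¹ * y⁻¹ = (y * f * y⁻¹)⁻¹ by group, show y * f * y⁻¹ = f by
          rw [hFy f hf]; group]
      have hconj : y * g * y⁻¹ = g := by
        calc y * g * y⁻¹ = (y * (g * f) * y⁻¹) * (y * f⁻¹ * y⁻¹) := by group
        _ = (g * f) * f⁻¹ := by rw [hfix, hyf]
        _ = g := by group
      calc y * g = (y * g * y⁻¹) * y := by group
      _ = g * y := by rw [hconj]
    rcases eq_or_lt_of_le hFE with hFeq | hFlt
    · -- F = E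
      set D := E ⊓ Subgroup.centralizer {y} with hDdef
      have hDmem : ∀ {g : G}, g ∈ D ↔ g ∈ E ∧ y * g = g * y := by
        intro g
        rw [hDdef, Subgroup.mem_inf, Subgroup.mem_centralizer_iff]
        simp
      by_cases hED : E ≤ D
      · intro g hg
        exact (hDmem.mp (hED hg)).2
      have hDE : D ≤ E := inf_le_left
      have hDlt : D < E := lt_of_le_of_ne hDE (fun h => hED (h ▸ le_refl E))
      -- D is t- and y- invariant
      have htD : ∀ g ∈ D, t * g * t⁻¹ ∈ D := by
        intro g hg
        rcases hDmem.mp hg with ⟨hgE, hgy⟩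
        refine hDmem.mpr ⟨conj_mem_of_mem_normalizer htE hgE, ?_⟩
        have hyt' : y * t⁻¹ = t⁻¹ * y := (hcty.inv_left.symm).eq
        calc y * (t * g * t⁻¹) = (y * t) * g * t⁻¹ := by group
        _ = (t * y) * g * t⁻¹ := by rw [hty]
        _ = t * (y * g) * t⁻¹ := by group
        _ = t * (g * y) * t⁻¹ := by rw [hgy]
        _ = (t * g) * (y * t⁻¹) := by group
        _ = (t * g) * (t⁻¹ * y) := by rw [hyt']
        _ = (t * g * t⁻¹) * y := by group
      have htDnorm : t ∈ Subgroup.normalizer (D : Set G) := mem_normalizer_of_conj_mem htD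
      have hyDnorm : y ∈ Subgroup.normalizer (D : Set G) := by
        apply mem_normalizer_of_conj_mem
        intro g hg
        rcases hDmem.mp hg with ⟨hgE, hgy⟩
        have h9 : y * g * y⁻¹ = g := by
          rw [hgy]
          group
        rw [h9]
        exact hg
      -- normalizer growth: get e ∈ E \ D normalizing D
      haveI : Group.IsNilpotent ↥E := hE.isNilpotent
      have hNC := normalizerCondition_of_isNilpotent (G := ↥E)
      have hDsubTop : D.subgroupOf E < ⊤ := by
        rcases SetLike.exists_of_lt hDlt with ⟨w, hwE, hwD⟩
        apply lt_top_iff_ne_top.mpr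
        intro htop
        exact hwD (by simpa using Subgroup.subgroupOf_eq_top.mp htop hwE)
      rcases SetLike.exists_of_lt (hNC _ hDsubTop) with ⟨ebar, hebar, hebarD⟩
      have heE : (ebar : G) ∈ E := ebar.2
      have heD : (ebar : G) ∉ D := fun h => hebarD (Subgroup.mem_subgroupOf.mpr h)
      have heDnorm : (ebar : G) ∈ Subgroup.normalizer (D : Set G) := by
        apply mem_normalizer_of_conj_mem
        intro h hh
        have h1 : (⟨h, hDE hh⟩ : ↥E) ∈ D.subgroupOf E := Subgroup.mem_subgroupOf.mpr hh
        have h2 := (Subgroup.mem_normalizer_iff.mp hebar _).mp h1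
        have h3 := Subgroup.mem_subgroupOf.mp h2
        simpa using h3
      -- N = E ⊓ N_G(D)
      set N := E ⊓ Subgroup.normalizer (D : Set G) with hNdef
      have hNE : N ≤ E := inf_le_left
      have hNt : ∀ g ∈ N, t * g * t⁻¹ ∈ N := by
        rintro g hg
        rcases Subgroup.mem_inf.mp hg with ⟨h1, h2⟩
        exact Subgroup.mem_inf.mpr ⟨conj_mem_of_mem_normalizer htE h1,
          Subgroup.mul_mem _ (Subgroup.mul_mem _ htDnorm h2) (Subgroup.inv_mem _ htDnorm)⟩
      have hNy : ∀ g ∈ N, y * g * y⁻¹ ∈ N := by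
        rintro g hg
        rcases Subgroup.mem_inf.mp hg with ⟨h1, h2⟩
        exact Subgroup.mem_inf.mpr ⟨conj_mem_of_mem_normalizer hyE h1,
          Subgroup.mul_mem _ (Subgroup.mul_mem _ hyDnorm h2) (Subgroup.inv_mem _ hyDnorm)⟩
      by_cases hEN : E ≤ N
      case neg =>
        have hNlt : N < E := lt_of_le_of_ne hNE (fun h => hEN (h ▸ le_refl E))
        have hcardN : Nat.card N ≤ n := by
          have h1 := card_lt_of_lt hNlt
          omega
        have hNcent := IH N hcardN (hE.to_le hNE) (mem_normalizer_of_conj_mem hNt)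
          (mem_normalizer_of_conj_mem hNy) (fun g hg hgt => hcent g (hNE hg) hgt)
        have heN : (ebar : G) ∈ N := Subgroup.mem_inf.mpr ⟨heE, heDnorm⟩
        exact absurd (hDmem.mpr ⟨heE, hNcent _ heN⟩) heD
      case pos =>
        have hEDnorm : E ≤ Subgroup.normalizer (D : Set G) := fun g hg => (Subgroup.mem_inf.mp (hEN hg)).2
        rcases exists_conj_coset_fixed ht hE hDlt htE htDnorm hEDnorm with ⟨g₀, hg₀E, hg₀D, hg₀⟩
        -- H = {g ∈ E | [t,g] ∈ D}
        set H : Subgroup G :=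
          { carrier := {g | g ∈ E ∧ t * g * t⁻¹ * g⁻¹ ∈ D}
            one_mem' := ⟨E.one_mem, by simpa using D.one_mem⟩
            mul_mem' := by
              rintro a b ⟨haE, haD⟩ ⟨hbE, hbD⟩
              refine ⟨E.mul_mem haE hbE, ?_⟩
              have key : t * (a * b) * t⁻¹ * (a * b)⁻¹ =
                  (t * a * t⁻¹ * a⁻¹) * (a * (t * b * t⁻¹ * b⁻¹) * a⁻¹) := by group
              rw [key]
              exact D.mul_mem haD (conj_mem_of_mem_normalizer (hEDnorm haE) hbD)
            inv_mem' := by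
              rintro a ⟨haE, haD⟩
              refine ⟨E.inv_mem haE, ?_⟩
              have key : t * a⁻¹ * t⁻¹ * (a⁻¹)⁻¹ =
                  a⁻¹ * (t * a * t⁻¹ * a⁻¹)⁻¹ * (a⁻¹)⁻¹ := by group
              rw [key]
              exact conj_mem_of_mem_normalizer (hEDnorm (E.inv_mem haE)) (D.inv_mem haD) } with hHdef
        have hHmem : ∀ {g : G}, g ∈ H ↔ g ∈ E ∧ t * g * t⁻¹ * g⁻¹ ∈ D := fun {g} => Iff.rfl
        have hHE : H ≤ E := fun g hg => (hHmem.mp hg).1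
        have hHt : ∀ g ∈ H, t * g * t⁻¹ ∈ H := by
          intro g hg
          rcases hHmem.mp hg with ⟨hgE, hgD⟩
          refine hHmem.mpr ⟨conj_mem_of_mem_normalizer htE hgE, ?_⟩
          have key : t * (t * g * t⁻¹) * t⁻¹ * (t * g * t⁻¹)⁻¹ =
              t * (t * g * t⁻¹ * g⁻¹) * t⁻¹ := by group
          rw [key]
          exact conj_mem_of_mem_normalizer htDnorm hgD
        have hinvy : t⁻¹ * y⁻¹ = y⁻¹ * t⁻¹ := by
          have := hcty.inv_inv.eq
          simpa using this
        have hinvy2 : y * t⁻¹ = t⁻¹ * y := (hcty.inv_left.symm).eq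
        have hHy : ∀ g ∈ H, y * g * y⁻¹ ∈ H := by
          intro g hg
          rcases hHmem.mp hg with ⟨hgE, hgD⟩
          refine hHmem.mpr ⟨conj_mem_of_mem_normalizer hyE hgE, ?_⟩
          have key : t * (y * g * y⁻¹) * t⁻¹ * (y * g * y⁻¹)⁻¹ =
              y * (t * g * t⁻¹ * g⁻¹) * y⁻¹ := by
            calc t * (y * g * y⁻¹) * t⁻¹ * (y * g * y⁻¹)⁻¹
                = (t * y) * g * (y⁻¹ * t⁻¹) * (y * g⁻¹ * y⁻¹) := by group
              _ = (y * t) * g * (t⁻¹ * y⁻¹) * (y * g⁻¹ * y⁻¹) := by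
                  rw [hty, ← hinvy]
              _ = y * (t * g * t⁻¹ * g⁻¹) * y⁻¹ := by group
          rw [key]
          exact conj_mem_of_mem_normalizer hyDnorm hgD
        by_cases hEH : E ≤ H
        case neg =>
          have hHlt : H < E := lt_of_le_of_ne hHE (fun h => hEH (h ▸ le_refl E))
          have hcardH : Nat.card H ≤ n := by
            have h1 := card_lt_of_lt hHlt
            omega
          have hHcent := IH H hcardH (hE.to_le hHE) (mem_normalizer_of_conj_mem hHt)
            (mem_normalizer_of_conj_mem hHy) (fun g hg hgt => hcent g (hHE hg) hgt)
          have hg₀H : g₀ ∈ H := hHmem.mpr ⟨hg₀E, hg₀⟩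
          exact absurd (hDmem.mpr ⟨hg₀E, hHcent _ hg₀H⟩) hg₀D
        case pos =>
          have hHall : ∀ g ∈ E, t * g * t⁻¹ * g⁻¹ ∈ D := fun g hg => (hEH hg).2
          -- [T, E] ≤ D
          have hTED : ⁅T, E⁆ ≤ D := by
            rw [Subgroup.commutator_le]
            intro a ha g hg
            -- a is a power of t; show by the subgroup K of elements with the property
            have hK : ∀ u : G, u ∈ T → u ∈ Subgroup.normalizer (E : Set G) ∧ u ∈ Subgroup.normalizer (D : Set G) ∧
                ∀ g ∈ E, u * g * u⁻¹ * g⁻¹ ∈ D := by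
              intro u hu
              set K : Subgroup G :=
                { carrier := {a | a ∈ Subgroup.normalizer (E : Set G) ∧ a ∈ Subgroup.normalizer (D : Set G) ∧
                    ∀ g ∈ E, a * g * a⁻¹ * g⁻¹ ∈ D}
                  one_mem' := ⟨Subgroup.one_mem _, Subgroup.one_mem _,
                    fun g _ => by simpa using D.one_mem⟩
                  mul_mem' := by
                    rintro a b ⟨haE, haD, haf⟩ ⟨hbE, hbD, hbf⟩
                    refine ⟨Subgroup.mul_mem _ haE hbE, Subgroup.mul_mem _ haD hbD, ?_⟩
                    intro g hg
                    have key : (a * b) * g * (a * b)⁻¹ * g⁻¹ =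
                        (a * (b * g * b⁻¹ * g⁻¹) * a⁻¹) * (a * g * a⁻¹ * g⁻¹) := by group
                    rw [key]
                    exact D.mul_mem (conj_mem_of_mem_normalizer haD (hbf g hg)) (haf g hg)
                  inv_mem' := by
                    rintro a ⟨haE, haD, haf⟩
                    refine ⟨Subgroup.inv_mem _ haE, Subgroup.inv_mem _ haD, ?_⟩
                    intro g hg
                    have hg' : a⁻¹ * g * a ∈ E := by
                      have := conj_mem_of_mem_normalizer (Subgroup.inv_mem _ haE) hg
                      simpa using this
                    have h5 := haf _ hg'
                    have key : a⁻¹ * g * (a⁻¹)⁻¹ * g⁻¹ =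
                        (a * (a⁻¹ * g * a) * a⁻¹ * (a⁻¹ * g * a)⁻¹)⁻¹ := by group
                    rw [key]
                    exact D.inv_mem h5 }
              have htK : t ∈ K := ⟨htE, htDnorm, hHall⟩
              exact Subgroup.zpowers_le.mpr htK hu
            rcases hK a ha with ⟨_, _, hf⟩
            have : ⁅a, g⁆ = a * g * a⁻¹ * g⁻¹ := commutatorElement_def a g
            rw [this]
            exact hf g hg
          have h1 : ⁅⁅Y, T⁆, E⁆ = ⊥ := by
            have hYT : ⁅Y, T⁆ = ⊥ := by
              rw [eq_bot_iff, Subgroup.commutator_le]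
              intro u hu v hv
              rcases Subgroup.mem_zpowers_iff.mp hu with ⟨j, rfl⟩
              rcases Subgroup.mem_zpowers_iff.mp hv with ⟨k, rfl⟩
              rw [Subgroup.mem_bot, commutatorElement_eq_one_iff_commute]
              exact (hcty.symm).zpow_zpow j k
            rw [hYT, Subgroup.commutator_bot_left]
          have h2 : ⁅⁅T, E⁆, Y⁆ = ⊥ := by
            rw [eq_bot_iff, Subgroup.commutator_le]
            intro d hd u hu
            have hdD : d ∈ D := hTED hd
            rcases hDmem.mp hdD with ⟨_, hdy⟩
            rcases Subgroup.mem_zpowers_iff.mp hu with ⟨k, rfl⟩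
            rw [Subgroup.mem_bot, commutatorElement_eq_one_iff_commute]
            exact (show Commute d y from hdy.symm).zpow_right k
          have h3 := Subgroup.commutator_commutator_eq_bot_of_rotate h1 h2
          intro g hg
          have hgF : g ∈ ⁅E, Y⁆ := by rw [← hFdef, hFeq]; exact hg
          have h4 : ⁅g, t⁆ ∈ ⁅⁅E, Y⁆, T⁆ :=
            Subgroup.commutator_mem_commutator hgF (Subgroup.mem_zpowers t)
          rw [h3, Subgroup.mem_bot, commutatorElement_eq_one_iff_mul_comm] at h4
          exact hcent g hg (h4.symm)
    · -- F < E : use induction hypothesis on F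
      have hcardF : Nat.card F ≤ n := by
        have := card_lt_of_lt hFlt
        omega
      apply key
      exact IH F hcardF (hE.to_le hFE) (mem_normalizer_of_conj_mem htF)
        (mem_normalizer_of_conj_mem hyF)
        (fun g hg hgt => hcent g (hFE hg) hgt)
end P4
section P5a
variable {G : Type*} [Group G] [Finite G]

/-- If `u` commutes with `x` then `u` normalizes `zpowers x`. -/
theorem mem_normalizer_zpowers_of_commute {u x : G} (h : Commute u x) :
    u ∈ Subgroup.normalizer ((Subgroup.zpowers x : Subgroup G) : Set G) := by
  rw [Subgroup.mem_normalizer_iff]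
  intro g
  constructor
  · intro hg
    rcases Subgroup.mem_zpowers_iff.mp hg with ⟨k, rfl⟩
    have : u * x ^ k * u⁻¹ = x ^ k := by
      rw [(h.zpow_right k).eq]; group
    rw [this]
    exact Subgroup.zpow_mem _ (Subgroup.mem_zpowers x) k
  · intro hg
    rcases Subgroup.mem_zpowers_iff.mp hg with ⟨k, hk⟩
    have : g = x ^ k := by
      have h2 : u * g * u⁻¹ = x ^ k := hk.symm
      have h3 : u * x ^ k * u⁻¹ = x ^ k := by rw [(h.zpow_right k).eq]; group
      have := h2.trans h3.symm
      exact mul_left_cancel (mul_right_cancel this)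
    rw [this]
    exact Subgroup.zpow_mem _ (Subgroup.mem_zpowers x) k

/-- A `p`-element normalizing `⟨x⟩` for `x` of order `p` centralizes `x`. -/
theorem conj_eq_self_of_pPow_order {p : ℕ} [Fact p.Prime] {x u : G} (hx : orderOf x = p)
    {m : ℕ} (hu : u ^ p ^ m = 1) (hconj : u * x * u⁻¹ ∈ Subgroup.zpowers x) :
    u * x = x * u := by
  have hx1 : x ≠ 1 := by
    intro h
    rw [h, orderOf_one] at hx
    exact (Fact.out : p.Prime).one_lt.ne' hx.symm
  rcases Subgroup.mem_zpowers_iff.mp hconj with ⟨c, hc⟩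
  -- iterate conjugation
  have hiter : ∀ n : ℕ, u ^ n * x * (u ^ n)⁻¹ = x ^ (c ^ n) := by
    intro n
    induction n with
    | zero => simp
    | succ n ih =>
      calc u ^ (n+1) * x * (u ^ (n+1))⁻¹ = u * (u ^ n * x * (u ^ n)⁻¹) * u⁻¹ := by
            rw [pow_succ']; group
      _ = u * x ^ (c ^ n) * u⁻¹ := by rw [ih]
      _ = (u * x * u⁻¹) ^ (c ^ n) := by rw [conj_zpow]
      _ = (x ^ c) ^ (c ^ n) := by rw [← hc]
      _ = x ^ (c ^ (n+1)) := by rw [← zpow_mul, pow_succ']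
  have hfix : x ^ (c ^ (p ^ m)) = x := by
    have := hiter (p ^ m)
    rw [hu] at this
    simpa using this.symm
  -- work in ZMod p
  have hmod : ((c : ZMod p)) ^ (p ^ m) = 1 := by
    have h1 : x ^ (c ^ (p ^ m) - 1) = 1 := by
      rw [zpow_sub, hfix]
      simp
    rw [zpow_eq_one_iff_modEq, hx] at h1
    have hdvd0 : (p : ℤ) ∣ (c ^ (p ^ m) - 1) := by
      have h9 := h1.dvd
      simpa using (dvd_neg.mp (by simpa using h9))
    have h2 : ((c ^ (p ^ m) - 1 : ℤ) : ZMod p) = 0 :=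
      (ZMod.intCast_zmod_eq_zero_iff_dvd _ p).mpr hdvd0
    push_cast at h2
    have : ((c : ZMod p)) ^ (p ^ m) - 1 = 0 := by exact_mod_cast h2
    linear_combination this
  have hcne : (c : ZMod p) ≠ 0 := by
    intro h0
    have hdvd : (p : ℤ) ∣ c := by exact_mod_cast (ZMod.intCast_zmod_eq_zero_iff_dvd c p).mp h0
    have : x ^ c = 1 := by
      rcases hdvd with ⟨d, rfl⟩
      rw [zpow_mul]
      have : (x : G) ^ (p : ℤ) = 1 := by
        rw [← hx]
        exact_mod_cast pow_orderOf_eq_one x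
      rw [this, one_zpow]
    rw [hc] at this
    apply hx1
    have h2 : u * x * u⁻¹ = 1 := this
    have : x = u⁻¹ * 1 * u := by rw [← h2]; group
    simpa using this
  -- lift to units
  set cu : (ZMod p)ˣ := Units.mk0 (c : ZMod p) hcne with hcu
  have hcupow : cu ^ (p ^ m) = 1 := by
    ext
    rw [Units.val_pow_eq_pow_val]
    simpa [hcu] using hmod
  have hdvd1 : orderOf cu ∣ p ^ m := orderOf_dvd_of_pow_eq_one hcupow
  have hdvd2 : orderOf cu ∣ p - 1 := by
    have h3 := orderOf_dvd_natCard cu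
    have h4 : Nat.card (ZMod p)ˣ = p - 1 := by
      rw [Nat.card_eq_fintype_card]
      exact ZMod.card_units p
    rwa [h4] at h3
  have hco : Nat.Coprime p (p - 1) := by
    have hp1 : p - 1 + 1 = p := Nat.succ_pred_eq_of_pos (Fact.out : p.Prime).pos
    have h8 : Nat.Coprime (p - 1 + 1) (p - 1) := by simp [Nat.Coprime, Nat.add_comm, Nat.gcd_comm, Nat.succ_sub_one]
    rwa [hp1] at h8
  have hcu1 : orderOf cu = 1 := by
    have h4 := Nat.dvd_gcd hdvd1 hdvd2
    have h5 : Nat.gcd (p ^ m) (p - 1) = 1 := hco.pow_left m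
    rw [h5] at h4
    exact Nat.dvd_one.mp h4
  have hcu2 : cu = 1 := orderOf_eq_one_iff.mp hcu1
  have hc1 : (c : ZMod p) = 1 := by
    have := congrArg Units.val hcu2
    simpa [hcu] using this
  have hdvdc : (p : ℤ) ∣ c - 1 := by
    have h6 : ((c - 1 : ℤ) : ZMod p) = 0 := by push_cast [hc1]; ring
    exact_mod_cast (ZMod.intCast_zmod_eq_zero_iff_dvd (c - 1) p).mp h6
  have hxc : x ^ c = x := by
    have h7 : x ^ (c - 1) = 1 := by
      rw [zpow_eq_one_iff_modEq, hx]
      exact Int.modEq_zero_iff_dvd.mpr hdvdc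
    calc x ^ c = x ^ (1 + (c - 1)) := by ring_nf
    _ = x * x ^ (c - 1) := by rw [zpow_add, zpow_one]
    _ = x := by rw [h7, mul_one]
  have : u * x * u⁻¹ = x := by rw [← hc, hxc]
  calc u * x = (u * x * u⁻¹) * u := by group
  _ = x * u := by rw [this]
end P5a

section Main
set_option maxHeartbeats 4000000


section MainAux
variable {p : ℕ} [Fact p.Prime] {G : Type*} [Group G] [Finite G]

theorem aux_mpr {t : G} (ht : orderOf t = p) {C : Subgroup G}
    (hmemC : ∀ {g : G}, g ∈ C ↔ t * g = g * t)
    (hchar : HasCharP p ↥C) :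
    ∃ x ∈ (pCore p ↥C).map C.subtype, IsPCentral p x := by
  have htC : t ∈ C := hmemC.mpr rfl
  set t' : ↥C := ⟨t, htC⟩ with ht'def
  haveI hnorm : (pCore p ↥C).Normal := pCore_normal
  have ht'ord : orderOf t' = p := by rw [ht'def, Subgroup.orderOf_mk]; exact ht
  have hXp : IsPGroup p ((Subgroup.zpowers t') ⊔ pCore p ↥C : Subgroup ↥C) := by
    apply IsPGroup.to_sup_of_normal_right
    · apply IsPGroup.of_card
      rw [Nat.card_zpowers, ht'ord, pow_one]
    · exact pCore_isPGroup
  obtain ⟨S, hS⟩ := hXp.exists_le_sylow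
  have hSg : IsPGroup p (((S : Subgroup ↥C)).map C.subtype) := S.isPGroup'.map _
  obtain ⟨Shat, hShat⟩ := hSg.exists_le_sylow
  have htS' : t' ∈ (S : Subgroup ↥C) := (le_trans le_sup_left hS) (Subgroup.mem_zpowers t')
  have htShat : t ∈ (Shat : Subgroup G) := hShat (Subgroup.mem_map.mpr ⟨t', htS', rfl⟩)
  have ht1 : t ≠ 1 := by
    intro h
    rw [h, orderOf_one] at ht
    have := (Fact.out : p.Prime).one_lt
    omega
  haveI : Nontrivial ↥(Shat : Subgroup G) :=
    ⟨⟨⟨t, htShat⟩, 1, by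
      intro h
      exact ht1 (by simpa using congrArg Subtype.val h)⟩⟩
  haveI hcenter := Shat.isPGroup'.center_nontrivial
  obtain ⟨w, hw1⟩ := exists_ne (1 : ↥(Subgroup.center ↥(Shat : Subgroup G)))
  set w' : ↥(Shat : Subgroup G) := (w : ↥(Shat : Subgroup G)) with hw'def
  obtain ⟨k, hk⟩ := Shat.isPGroup' w'
  have hdvd : orderOf w' ∣ p ^ k := orderOf_dvd_of_pow_eq_one hk
  obtain ⟨m, hmk, hm⟩ := (Nat.dvd_prime_pow (Fact.out : p.Prime)).mp hdvd
  have hm0 : m ≠ 0 := by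
    intro h0
    rw [h0, pow_zero] at hm
    have hA : w' = 1 := orderOf_eq_one_iff.mp hm
    apply hw1
    ext
    simpa [hw'def] using congrArg Subtype.val hA
  set z' := w' ^ (p ^ (m-1)) with hz'def
  have hz'ord : orderOf z' = p := by
    rw [hz'def, orderOf_pow, hm]
    have h1 : p ^ (m-1) ∣ p ^ m := pow_dvd_pow p (by omega)
    rw [Nat.gcd_eq_right h1]
    have h2 : p ^ m = p ^ (m-1) * p := by
      rw [← pow_succ]
      congr 1
      omega
    rw [h2]
    exact Nat.mul_div_cancel_left p (Nat.pow_pos (Fact.out : p.Prime).pos)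
  have hz'c : z' ∈ Subgroup.center ↥(Shat : Subgroup G) := by
    rw [hz'def]
    exact Subgroup.pow_mem _ w.2 _
  set z := (z' : G) with hzdef
  have hzord : orderOf z = p := by rw [hzdef, Subgroup.orderOf_coe]; exact hz'ord
  have hzcent : ∀ s ∈ (Shat : Subgroup G), s * z = z * s := by
    intro s hs
    have h3 := (Subgroup.mem_center_iff.mp hz'c) ⟨s, hs⟩
    exact congrArg Subtype.val h3
  have hzC : z ∈ C := hmemC.mpr (hzcent t htShat)
  have hzcentral : IsPCentral p z :=
    ⟨hzord, Shat, Subgroup.mem_inf.mpr ⟨z'.2, Subgroup.mem_centralizer_iff.mpr hzcent⟩⟩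
  have hzQ : z ∈ (pCore p ↥C).map C.subtype := by
    apply OP_mem_of_charP hchar hzC
    intro u hu
    rcases Subgroup.mem_map.mp hu with ⟨u', hu', rfl⟩
    have h2 : u' ∈ (S : Subgroup ↥C) := (le_trans le_sup_right hS) hu'
    have h3 : (u' : G) ∈ (Shat : Subgroup G) := hShat (Subgroup.mem_map.mpr ⟨u', h2, rfl⟩)
    exact hzcent _ h3
  exact ⟨z, hzQ, hzcentral⟩

theorem aux_mp (hG : ParabolicCharP p G) {t : G} (ht : orderOf t = p) {C : Subgroup G}
    (hmemC : ∀ {g : G}, g ∈ C ↔ t * g = g * t)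
    {x : G} (hxQ : x ∈ (pCore p ↥C).map C.subtype) (hx : IsPCentral p x) :
    HasCharP p ↥C := by
  obtain ⟨hxord, Shat, hxmem⟩ := hx
  rcases Subgroup.mem_inf.mp hxmem with ⟨hxS, hxcent'⟩
  have hxcent : ∀ s ∈ (Shat : Subgroup G), s * x = x * s :=
    Subgroup.mem_centralizer_iff.mp hxcent'
  have hx1 : x ≠ 1 := by
    intro h
    rw [h, orderOf_one] at hxord
    have := (Fact.out : p.Prime).one_lt
    omega
  have htC : t ∈ C := hmemC.mpr rfl
  have hCt : ∀ c ∈ C, t * c = c * t := fun c hc => hmemC.mp hc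
  set Q := (pCore p ↥C).map C.subtype with hQdef
  have hQle : Q ≤ C := Subgroup.map_subtype_le _
  have hQp : IsPGroup p Q := pCore_isPGroup.map _
  have hQconj : ∀ c ∈ C, ∀ u ∈ Q, c * u * c⁻¹ ∈ Q := fun c hc u hu => OP_conj_mem hc hu
  have htQ : t ∈ Q := by
    refine le_OP (Subgroup.zpowers_le.mpr htC) ?_ ?_ (Subgroup.mem_zpowers t)
    · apply IsPGroup.of_card
      rw [Nat.card_zpowers, ht, pow_one]
    · intro c hc g hg
      rcases Subgroup.mem_zpowers_iff.mp hg with ⟨kk, rfl⟩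
      have h2 : Commute c (t ^ kk) := ((show Commute t c from hCt c hc).symm).zpow_right kk
      rw [show c * t ^ kk * c⁻¹ = t ^ kk by rw [h2.eq]; group]
      exact Subgroup.zpow_mem _ (Subgroup.mem_zpowers t) kk
  set P := Subgroup.zpowers x with hPdef
  have hPp : IsPGroup p P := by
    apply IsPGroup.of_card
    rw [Nat.card_zpowers, hxord, pow_one]
  have hPbot : P ≠ ⊥ := by rw [hPdef]; exact Subgroup.zpowers_ne_bot.mpr hx1
  have hSN : (Shat : Subgroup G) ≤ Subgroup.normalizer (P : Set G) := fun s hs =>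
    mem_normalizer_zpowers_of_commute (show Commute s x from hxcent s hs)
  have hcharN : HasCharP p ↥(Subgroup.normalizer (P : Set G)) := hG P hPbot hPp ⟨Shat, hSN⟩
  set N := Subgroup.normalizer (P : Set G) with hNdef
  set E := (pCore p ↥N).map N.subtype with hEdef
  have hEp : IsPGroup p E := pCore_isPGroup.map _
  have hEN : E ≤ N := Subgroup.map_subtype_le _
  have hEconj : ∀ nn ∈ N, ∀ u ∈ E, nn * u * nn⁻¹ ∈ E := fun nn hn u hu => OP_conj_mem hn hu
  have hEchar : ∀ g ∈ N, (∀ u ∈ E, u * g = g * u) → g ∈ E :=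
    fun g hg h => OP_mem_of_charP hcharN hg h
  have hxE : x ∈ E := by
    refine le_OP Subgroup.le_normalizer hPp ?_ (Subgroup.mem_zpowers x)
    intro nn hn g hg
    exact (Subgroup.mem_normalizer_iff.mp hn g).mp hg
  have hEx : ∀ u ∈ E, u * x = x * u := by
    intro u hu
    obtain ⟨kk, hkk⟩ := hEp ⟨u, hu⟩
    have hk' : u ^ (p ^ kk) = 1 := by
      have := congrArg Subtype.val hkk
      simpa using this
    apply conj_eq_self_of_pPow_order hxord hk'
    exact (Subgroup.mem_normalizer_iff.mp (hEN hu) x).mp (Subgroup.mem_zpowers x)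
  have htN : t ∈ N := mem_normalizer_zpowers_of_commute (show Commute t x from hCt x (hQle hxQ))
  set W := Subgroup.centralizer (Q : Set G) with hWdef
  have hWmem : ∀ {w : G}, w ∈ W ↔ ∀ u ∈ Q, u * w = w * u := fun {w} =>
    Subgroup.mem_centralizer_iff
  have hWC : W ≤ C := fun w hw => hmemC.mpr (hWmem.mp hw t htQ)
  have hWconjC : ∀ c ∈ C, ∀ w ∈ W, c * w * c⁻¹ ∈ W := by
    intro c hc w hw
    apply hWmem.mpr
    intro u hu
    have h1 : c⁻¹ * u * c ∈ Q := by
      have h0 := hQconj c⁻¹ (C.inv_mem hc) u hu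
      simpa using h0
    have h2 := hWmem.mp hw _ h1
    calc u * (c * w * c⁻¹) = c * ((c⁻¹ * u * c) * w) * c⁻¹ := by group
    _ = c * (w * (c⁻¹ * u * c)) * c⁻¹ := by rw [h2]
    _ = (c * w * c⁻¹) * u := by group
  have hWN : W ≤ N := fun w hw =>
    mem_normalizer_zpowers_of_commute ((show Commute x w from hWmem.mp hw x hxQ).symm)
  set V := E ⊓ C with hVdef
  set U := E ⊓ W with hUdef
  have hUp : IsPGroup p U := hEp.to_le inf_le_left
  have hVW : ∀ v ∈ V, ∀ w ∈ W, v * w * v⁻¹ * w⁻¹ ∈ U := by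
    intro v hv w hw
    rcases Subgroup.mem_inf.mp hv with ⟨hvE, hvC⟩
    refine Subgroup.mem_inf.mpr ⟨?_, ?_⟩
    · have h1 : w * v⁻¹ * w⁻¹ ∈ E := hEconj w (hWN hw) v⁻¹ (E.inv_mem hvE)
      rw [show v * w * v⁻¹ * w⁻¹ = v * (w * v⁻¹ * w⁻¹) by group]
      exact E.mul_mem hvE h1
    · have h2 : v * w * v⁻¹ ∈ W := hWconjC v hvC w hw
      exact W.mul_mem h2 (W.inv_mem hw)
  have hUW : ∀ w ∈ W, ∀ u ∈ U, w * u * w⁻¹ ∈ U := by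
    intro w hw u hu
    rcases Subgroup.mem_inf.mp hu with ⟨huE, huW⟩
    exact Subgroup.mem_inf.mpr ⟨hEconj w (hWN hw) u huE,
      W.mul_mem (W.mul_mem hw huW) (W.inv_mem hw)⟩
  have hUQ : U ≤ Q := by
    have h1 : U ≤ (pCore p ↥W).map W.subtype := le_OP inf_le_right hUp hUW
    have h2 : (pCore p ↥W).map W.subtype ≤ Q := by
      apply le_OP (le_trans (Subgroup.map_subtype_le _) hWC) (pCore_isPGroup.map _)
      intro c hc v hv
      exact OP_conj_inv (hWconjC c hc)
        (fun g hg => by simpa using hWconjC c⁻¹ (C.inv_mem hc) g hg) hv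
    exact le_trans h1 h2
  have hUcent : ∀ u ∈ U, ∀ w ∈ W, u * w = w * u := fun u hu w hw => hWmem.mp hw u (hUQ hu)
  -- W is a p-group
  have hWp : IsPGroup p ↥W := by
    rw [IsPGroup.iff_card]
    have hpos : Nat.card ↥W ≠ 0 := Nat.card_pos.ne'
    have hprime : ∀ {d : ℕ}, d.Prime → d ∣ Nat.card ↥W → d = p := by
      intro q hq hqdvd
      by_contra hqp
      haveI : Fact q.Prime := ⟨hq⟩
      obtain ⟨ybar, hybar⟩ := exists_prime_orderOf_dvd_card' (G := ↥W) q hqdvd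
      set y := (ybar : G) with hydef
      have hyW : y ∈ W := ybar.2
      have hyord : orderOf y = q := by rw [hydef, Subgroup.orderOf_coe]; exact hybar
      have hyV : ∀ v ∈ V, y * v = v * y := by
        intro v hv
        set δ := v⁻¹ * (y * v * y⁻¹) with hdeltadef
        have hδU : δ ∈ U := by
          have h1 : v⁻¹ * y * (v⁻¹)⁻¹ * y⁻¹ ∈ U := hVW v⁻¹ (V.inv_mem hv) y hyW
          rw [show δ = v⁻¹ * y * (v⁻¹)⁻¹ * y⁻¹ by rw [hdeltadef]; group]
          exact h1
        have hδy : δ * y = y * δ := hUcent δ hδU y hyW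
        have hiter : ∀ n2 : ℕ, y ^ n2 * v * (y ^ n2)⁻¹ = v * δ ^ n2 := by
          intro n2
          induction n2 with
          | zero => simp
          | succ n2 ih =>
            calc y ^ (n2+1) * v * (y ^ (n2+1))⁻¹
                = y * (y ^ n2 * v * (y ^ n2)⁻¹) * y⁻¹ := by rw [pow_succ']; group
            _ = y * (v * δ ^ n2) * y⁻¹ := by rw [ih]
            _ = (y * v * y⁻¹) * (y * δ ^ n2 * y⁻¹) := by group
            _ = (v * δ) * (y * δ ^ n2 * y⁻¹) := by
                rw [show y * v * y⁻¹ = v * δ by rw [hdeltadef]; group]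
            _ = (v * δ) * δ ^ n2 := by
                rw [show y * δ ^ n2 * y⁻¹ = δ ^ n2 by
                  rw [((show Commute y δ from hδy.symm).pow_right n2).eq]; group]
            _ = v * δ ^ (n2+1) := by rw [pow_succ']; group
        obtain ⟨kU, hkU⟩ := IsPGroup.iff_card.mp hUp
        have hδpow : δ ^ (p ^ kU) = 1 := by
          have h5 : orderOf δ ∣ p ^ kU := by
            rw [← hkU]
            exact Subgroup.orderOf_dvd_natCard U hδU
          exact orderOf_dvd_iff_pow_eq_one.mp h5
        have hc1 : y ^ (p ^ kU) * v * (y ^ (p ^ kU))⁻¹ = v := by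
          rw [hiter (p ^ kU), hδpow, mul_one]
        have hcomm1 : Commute v (y ^ (p ^ kU)) := by
          have h6 : y ^ (p ^ kU) * v = v * y ^ (p ^ kU) := by
            calc y ^ (p ^ kU) * v
                = (y ^ (p ^ kU) * v * (y ^ (p ^ kU))⁻¹) * y ^ (p ^ kU) := by group
            _ = v * y ^ (p ^ kU) := by rw [hc1]
          exact (show Commute (y ^ (p ^ kU)) v from h6).symm
        have hcomm2 : Commute v (y ^ q) := by
          rw [← hyord, pow_orderOf_eq_one]
          exact Commute.one_right v
        have hcop : Nat.Coprime (p ^ kU) q :=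
          ((Nat.coprime_primes (Fact.out : p.Prime) hq).mpr
            (fun h => hqp h.symm)).pow_left kU
        have hbez : IsCoprime ((p : ℤ) ^ kU) (q : ℤ) := by
          rw [Int.isCoprime_iff_gcd_eq_one]
          exact_mod_cast hcop
        obtain ⟨a, b, hab⟩ := hbez
        have hcomm : Commute v y := by
          have h7 : (y ^ (p ^ kU)) ^ a * (y ^ q) ^ b = y := by
            rw [← zpow_natCast y (p ^ kU), ← zpow_natCast y q, ← zpow_mul, ← zpow_mul,
              ← zpow_add]
            have h8 : (↑(p ^ kU) : ℤ) * a + (↑q : ℤ) * b = 1 := by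
              push_cast
              push_cast at hab
              linarith
            rw [h8, zpow_one]
          rw [← h7]
          exact (hcomm1.zpow_right a).mul_right (hcomm2.zpow_right b)
        exact hcomm.symm.eq
      have htEc : ∀ g ∈ E, t * g * t⁻¹ ∈ E := fun g hg => hEconj t htN g hg
      have hyEc : ∀ g ∈ E, y * g * y⁻¹ ∈ E := fun g hg => hEconj y (hWN hyW) g hg
      have hty : t * y = y * t := hCt y (hWC hyW)
      have hq_cent : ∀ g ∈ E, y * g = g * y := by
        apply pq_aux hq hqp ht hyord hty (Nat.card ↥E) E le_rfl hEp
          (mem_normalizer_of_conj_mem htEc) (mem_normalizer_of_conj_mem hyEc)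
        intro g hg hgt
        exact hyV g (Subgroup.mem_inf.mpr ⟨hg, hmemC.mpr hgt⟩)
      have hyE2 : y ∈ E := hEchar y (hWN hyW) (fun u hu => (hq_cent u hu).symm)
      obtain ⟨kE, hkE⟩ := hEp ⟨y, hyE2⟩
      have hkE' : y ^ (p ^ kE) = 1 := by
        have := congrArg Subtype.val hkE
        simpa using this
      have hqdvd2 : q ∣ p ^ kE := hyord ▸ orderOf_dvd_of_pow_eq_one hkE'
      have hqdvd3 : q ∣ p := hq.dvd_of_dvd_pow hqdvd2
      exact hqp ((Nat.prime_dvd_prime_iff_eq hq (Fact.out : p.Prime)).mp hqdvd3)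
    exact ⟨_, Nat.eq_prime_pow_of_unique_prime_dvd hpos hprime⟩
  have hWQ : W ≤ Q := le_OP hWC hWp (fun c hc w hw => hWconjC c hc w hw)
  show Subgroup.centralizer ((pCore p ↥C : Subgroup ↥C) : Set ↥C) ≤ pCore p ↥C
  intro cbar hcbar
  have hcW : (cbar : G) ∈ W := by
    apply hWmem.mpr
    intro u hu
    rcases Subgroup.mem_map.mp hu with ⟨ubar, hubar, rfl⟩
    have h9 := Subgroup.mem_centralizer_iff.mp hcbar ubar hubar
    exact congrArg Subtype.val h9
  have h10 := hWQ hcW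
  rcases Subgroup.mem_map.mp h10 with ⟨ubar, hubar, hcoe⟩
  have h11 : ubar = cbar := Subtype.coe_injective hcoe
  rw [← h11]
  exact hubar

end MainAux

/-- For `G` of parabolic characteristic `p` and `T = ⟨t⟩` of order `p` with `t` not
`p`-central, `O_p(C_G(T))` contains a `p`-central element of `G` iff `C_G(T)` has
characteristic `p`. -/
theorem stmt14 (p : ℕ) [Fact p.Prime] (G : Type*) [Group G] [Finite G]
    (hG : ParabolicCharP p G) (t : G) (ht : orderOf t = p) (hnc : ¬ IsPCentral p t)
    (T C : Subgroup G) (hT : T = Subgroup.zpowers t)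
    (hC : C = Subgroup.centralizer (T : Set G)) :
    (∃ x ∈ (pCore p ↥C).map C.subtype, IsPCentral p x) ↔ HasCharP p ↥C := by
  subst hT
  subst hC
  have hmemC : ∀ {g : G}, g ∈ Subgroup.centralizer ((Subgroup.zpowers t : Subgroup G) : Set G) ↔
      t * g = g * t := by
    intro g
    rw [Subgroup.mem_centralizer_iff]
    constructor
    · intro h
      exact h t (Subgroup.mem_zpowers t)
    · intro h s hs
      rcases Subgroup.mem_zpowers_iff.mp hs with ⟨k, rfl⟩
      exact ((show Commute t g from h).zpow_left k).eq
  constructor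
  · rintro ⟨x, hxQ, hx⟩
    exact aux_mp hG ht hmemC hxQ hx
  · intro hchar
    exact aux_mpr ht hmemC hchar

end Main
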